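/- arXiv:2206.10180 — 6 statements merged into one kernel-verified Lean document; each statement's English description precedes it below -/
import Mathlib

section
/- For any p > 1, the function c⁺(x,y) = (Γ(1-1/p)·Γ(1+1/p))^{-1} (1-x^p-y^p)^{-1/p} · 1[x^p+y^p<1] on (0,1)² is a probability density with uniform U(0,1) marginals, i.e., for every x ∈ (0,1), ∫_0^1 c⁺(x,y) dy = 1. -/
open MeasureTheory Set Real

lemma real_beta {a b : ℝ} (ha : 0 < a) (hb : 0 < b) :
    ∫ t in (0:ℝ)..1, t ^ (a-1) * (1-t) ^ (b-1) = Gamma a * Gamma b / Gamma (a+b) := by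
  have key := Complex.Gamma_mul_Gamma_eq_betaIntegral (s := a) (t := b) (by simpa) (by simpa)
  have hbeta : Complex.betaIntegral a b
      = ((∫ t in (0:ℝ)..1, t ^ (a-1) * (1-t) ^ (b-1) : ℝ) : ℂ) := by
    rw [Complex.betaIntegral, ← intervalIntegral.integral_ofReal]
    refine intervalIntegral.integral_congr fun t ht => ?_
    rw [uIcc_of_le zero_le_one] at ht
    rw [Complex.ofReal_mul, Complex.ofReal_cpow ht.1, Complex.ofReal_cpow (by linarith [ht.2])]
    push_cast
    ring
  rw [hbeta, ← Complex.ofReal_add, Complex.Gamma_ofReal, Complex.Gamma_ofReal,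
    Complex.Gamma_ofReal, ← Complex.ofReal_mul, ← Complex.ofReal_mul] at key
  have h := Complex.ofReal_inj.mp key
  have hne : Gamma (a+b) ≠ 0 := (Gamma_pos_of_pos (by linarith)).ne'
  field_simp [h]
  rw [h]; ring

/-- The bivariate positive L_p-norm spherical copula density has uniform marginals:
for every x ∈ (0,1), ∫_0^1 c⁺(x,y) dy = 1. -/
theorem bivariate_lp_copula_uniform_marginals (p : ℝ) (hp : 1 < p) :
    ∀ x ∈ Ioo (0:ℝ) 1,
      (∫ y in (0:ℝ)..1,
        (if x ^ p + y ^ p < 1 then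
          (Real.Gamma (1 - 1/p) * Real.Gamma (1 + 1/p))⁻¹ *
            (1 - x ^ p - y ^ p) ^ (-(1/p))
        else 0)) = 1 := by
  intro x hx
  have hp0 : (0:ℝ) < p := lt_trans one_pos hp
  set s : ℝ := 1/p with hs
  have hs0 : 0 < s := by positivity
  have hs1 : s < 1 := by rw [hs, div_lt_one hp0]; exact hp
  have hsp : s * p = 1 := by rw [hs]; field_simp
  have hxp0 : 0 < x ^ p := rpow_pos_of_pos hx.1 p
  have hxp1 : x ^ p < 1 := rpow_lt_one hx.1.le hx.2 hp0
  set a : ℝ := 1 - x ^ p with ha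
  have ha0 : 0 < a := by rw [ha]; linarith
  have ha1 : a < 1 := by rw [ha]; linarith
  set b : ℝ := a ^ s with hb
  have hb0 : 0 < b := rpow_pos_of_pos ha0 s
  have hb1 : b < 1 := by rw [hb]; exact rpow_lt_one ha0.le ha1 hs0
  have hbp : b ^ p = a := by rw [hb, ← rpow_mul ha0.le, hsp, rpow_one]
  set C : ℝ := (Gamma (1 - s) * Gamma (1 + s))⁻¹ with hC
  set g : ℝ → ℝ := fun y => C * (a - y ^ p) ^ (-s) with hg
  -- Step 1: reduce to a set integral over Ioo 0 b
  have step1 : (∫ y in (0:ℝ)..1,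
        (if x ^ p + y ^ p < 1 then C * (1 - x ^ p - y ^ p) ^ (-s) else 0))
      = ∫ y in Ioo (0:ℝ) b, g y := by
    have hsub : Ioo (0:ℝ) b ⊆ Ioc 0 1 := fun y hy => ⟨hy.1, le_of_lt (hy.2.trans hb1)⟩
    rw [intervalIntegral.integral_of_le zero_le_one,
      ← inter_eq_self_of_subset_right hsub, ← setIntegral_indicator measurableSet_Ioo]
    refine setIntegral_congr_fun measurableSet_Ioc fun y hy => ?_
    by_cases hyb : y < b
    · have hylt : y ^ p < a := by
        have := rpow_lt_rpow hy.1.le hyb hp0; rwa [hbp] at this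
      have hcond : x ^ p + y ^ p < 1 := by
        have h' := hylt; rw [ha] at h'; linarith
      rw [indicator_of_mem (show y ∈ Ioo 0 b from ⟨hy.1, hyb⟩), if_pos hcond]
    · have hyge : a ≤ y ^ p := by
        have := rpow_le_rpow hb0.le (not_lt.mp hyb) hp0.le; rwa [hbp] at this
      rw [if_neg (by rw [ha] at hyge; linarith),
        indicator_of_notMem (fun h => hyb h.2)]
  -- Step 2: change of variables y = (a*t)^s
  set φ : ℝ → ℝ := fun t => (a * t) ^ s with hφ
  set φ' : ℝ → ℝ := fun t => a * s * (a * t) ^ (s - 1) with hφ'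
  have hφp : ∀ t : ℝ, 0 < t → φ t ^ p = a * t := by
    intro t ht
    rw [hφ, ← rpow_mul (by positivity), hsp, rpow_one]
  have hderiv : ∀ t ∈ Ioo (0:ℝ) 1, HasDerivWithinAt φ (φ' t) (Ioo 0 1) t := by
    intro t ht
    have h1 : HasDerivAt (fun t : ℝ => a * t) a t := by
      simpa using (hasDerivAt_id t).const_mul a
    have h2 := h1.rpow_const (p := s) (Or.inl (mul_pos ha0 ht.1).ne')
    exact h2.hasDerivWithinAt
  have hinj : InjOn φ (Ioo (0:ℝ) 1) := by
    intro t1 h1 t2 h2 heq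
    have e1 := hφp t1 h1.1
    have e2 := hφp t2 h2.1
    have : a * t1 = a * t2 := by rw [← e1, ← e2, heq]
    exact mul_left_cancel₀ ha0.ne' this
  have himg : φ '' Ioo (0:ℝ) 1 = Ioo 0 b := by
    ext y
    constructor
    · rintro ⟨t, ht, rfl⟩
      refine ⟨rpow_pos_of_pos (mul_pos ha0 ht.1) s, ?_⟩
      rw [hb]
      exact rpow_lt_rpow (mul_pos ha0 ht.1).le (by nlinarith [ht.1, ht.2, ha0]) hs0
    · intro hy
      refine ⟨y ^ p / a, ⟨div_pos (rpow_pos_of_pos hy.1 p) ha0, ?_⟩, ?_⟩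
      · rw [div_lt_one ha0, ← hbp]
        exact rpow_lt_rpow hy.1.le hy.2 hp0
      · show (a * (y ^ p / a)) ^ s = y
        rw [mul_div_cancel₀ _ ha0.ne', ← rpow_mul hy.1.le, mul_comm p s, hsp, rpow_one]
  have step2 : ∫ y in Ioo (0:ℝ) b, g y = ∫ t in Ioo (0:ℝ) 1, |φ' t| • g (φ t) := by
    rw [← himg]
    exact integral_image_eq_integral_abs_deriv_smul measurableSet_Ioo hderiv hinj g
  -- Step 3: simplify the transformed integrand
  have step3 : ∫ t in Ioo (0:ℝ) 1, |φ' t| • g (φ t)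
      = ∫ t in Ioo (0:ℝ) 1, (C * s) * (t ^ (s-1) * (1-t) ^ ((1-s)-1)) := by
    refine setIntegral_congr_fun measurableSet_Ioo fun t ht => ?_
    have ht0 : 0 < t := ht.1
    have ht1 : t < 1 := ht.2
    have hat : 0 < a * t := by positivity
    have habs : |φ' t| = a * s * (a * t) ^ (s - 1) := by
      simp only [hφ']
      exact abs_of_pos (mul_pos (mul_pos ha0 hs0) (rpow_pos_of_pos hat _))
    have hgφ : g (φ t) = C * (a ^ (-s) * (1 - t) ^ (-s)) := by
      simp only [hg]
      rw [hφp t ht0]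
      have : a - a * t = a * (1 - t) := by ring
      rw [this, mul_rpow ha0.le (by linarith)]
    rw [smul_eq_mul, habs, hgφ, mul_rpow ha0.le ht0.le]
    have haa : a * (a ^ (s - 1) * a ^ (-s)) = 1 := by
      rw [← rpow_add ha0]
      have : s - 1 + -s = -1 := by ring
      rw [this, rpow_neg_one, mul_inv_cancel₀ ha0.ne']
    have h1s : (1:ℝ) - s - 1 = -s := by ring
    calc a * s * (a ^ (s-1) * t ^ (s-1)) * (C * (a ^ (-s) * (1-t) ^ (-s)))
        = (a * (a ^ (s-1) * a ^ (-s))) * ((C * s) * (t ^ (s-1) * (1-t) ^ (-s))) := by ring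
      _ = (C * s) * (t ^ (s-1) * (1-t) ^ ((1-s)-1)) := by rw [haa, h1s, one_mul]
  -- Step 4: evaluate via the Beta integral
  have step4 : ∫ t in Ioo (0:ℝ) 1, (C * s) * (t ^ (s-1) * (1-t) ^ ((1-s)-1))
      = (C * s) * (Gamma s * Gamma (1-s)) := by
    rw [MeasureTheory.integral_const_mul, ← integral_Ioc_eq_integral_Ioo,
      ← intervalIntegral.integral_of_le zero_le_one,
      real_beta hs0 (by linarith : (0:ℝ) < 1 - s)]
    rw [show s + (1 - s) = 1 by ring, Gamma_one, div_one]
  -- Conclude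
  rw [step1, step2, step3, step4, hC]
  have hΓs : (0:ℝ) < Gamma s := Gamma_pos_of_pos hs0
  have hΓ1s : (0:ℝ) < Gamma (1 - s) := Gamma_pos_of_pos (by linarith)
  rw [show (1:ℝ) + s = s + 1 by ring, Gamma_add_one hs0.ne']
  field_simp
end

section
/- For all x ∈ (0,1), 4ψ(2x) - ψ(x) - 3ψ(3x) < 0, where ψ is the digamma function. -/
open Real Set

/-- The digamma function ψ = Γ'/Γ. -/
noncomputable def digamma (x : ℝ) : ℝ := deriv Real.Gamma x / Real.Gamma x

namespace DigammaAux

/-- Summand of the log-Gamma combination series. -/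
noncomputable def u (k : ℕ) (y : ℝ) : ℝ :=
  Real.log (y + k) + Real.log (3 * y + k) - 2 * Real.log (2 * y + k)

/-- Derivative of `u k`. -/
noncomputable def g (k : ℕ) (y : ℝ) : ℝ :=
  1 / (y + k) + 3 / (3 * y + k) - 4 / (2 * y + k)

lemma g_eq {k : ℕ} (hk : 1 ≤ k) {y : ℝ} (hy : 0 < y) :
    g k y = -(2 * k * y) / ((y + k) * (2 * y + k) * (3 * y + k)) := by
  have hk' : (1:ℝ) ≤ (k:ℝ) := by exact_mod_cast hk
  have h1 : y + (k:ℝ) ≠ 0 := by positivity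
  have h2 : 2 * y + (k:ℝ) ≠ 0 := by positivity
  have h3 : 3 * y + (k:ℝ) ≠ 0 := by positivity
  unfold g
  field_simp
  ring

lemma g_neg {k : ℕ} (hk : 1 ≤ k) {y : ℝ} (hy : 0 < y) : g k y < 0 := by
  rw [g_eq hk hy]
  have hk' : (1:ℝ) ≤ (k:ℝ) := by exact_mod_cast hk
  have hnum : 0 < 2 * (k:ℝ) * y := by positivity
  have hden : 0 < (y + (k:ℝ)) * (2 * y + k) * (3 * y + k) := by positivity
  have := div_pos hnum hden
  linarith [neg_div ((y + (k:ℝ)) * (2 * y + k) * (3 * y + k)) (2 * (k:ℝ) * y), this]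

lemma g_bound {k : ℕ} (hk : 1 ≤ k) {y : ℝ} (hy : y ∈ Ioo (0:ℝ) 1) :
    ‖g k y‖ ≤ 2 / (k:ℝ) ^ 2 := by
  obtain ⟨hy0, hy1⟩ := hy
  have hk' : (1:ℝ) ≤ (k:ℝ) := by exact_mod_cast hk
  have hk0 : (0:ℝ) < (k:ℝ) := by linarith
  rw [g_eq hk hy0, Real.norm_eq_abs, neg_div, abs_neg, abs_div]
  have hnum : 0 ≤ 2 * (k:ℝ) * y := by positivity
  have hden : 0 < (y + (k:ℝ)) * (2 * y + k) * (3 * y + k) := by positivity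
  rw [abs_of_nonneg hnum, abs_of_pos hden]
  rw [div_le_div_iff₀ hden (by positivity)]
  have h1 : (k:ℝ) ≤ y + k := by linarith
  have h2 : (k:ℝ) ≤ 2 * y + k := by linarith
  have h3 : (k:ℝ) ≤ 3 * y + k := by linarith
  have hkk : (k:ℝ) * k * k ≤ (y + (k:ℝ)) * (2 * y + k) * (3 * y + k) := by
    have := mul_le_mul (mul_le_mul h1 h2 hk0.le (by linarith)) h3 hk0.le (by positivity)
    linarith
  nlinarith [sq_nonneg ((k:ℝ))]

lemma u_nonpos {k : ℕ} (hk : 1 ≤ k) {y : ℝ} (hy : 0 < y) : u k y ≤ 0 := by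
  have hk' : (1:ℝ) ≤ (k:ℝ) := by exact_mod_cast hk
  have h1 : (0:ℝ) < y + k := by linarith
  have h3 : (0:ℝ) < 3 * y + k := by linarith
  have h2 : (0:ℝ) < 2 * y + k := by linarith
  have key : (y + (k:ℝ)) * (3 * y + k) ≤ (2 * y + k) ^ 2 := by nlinarith [sq_nonneg y]
  have := Real.log_le_log (by positivity) key
  rw [Real.log_mul h1.ne' h3.ne', Real.log_pow] at this
  simp only [u]
  push_cast at this ⊢
  linarith

lemma u_lower {k : ℕ} (hk : 1 ≤ k) {y : ℝ} (hy0 : 0 < y) (hy1 : y ≤ 1) :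
    -(1 / (k:ℝ) ^ 2) ≤ u k y := by
  have hk' : (1:ℝ) ≤ (k:ℝ) := by exact_mod_cast hk
  have h1 : (0:ℝ) < y + k := by linarith
  have h3 : (0:ℝ) < 3 * y + k := by linarith
  have h2 : (0:ℝ) < 2 * y + k := by linarith
  -- -u k y = log ((2y+k)^2 / ((y+k)(3y+k))) ≤ (2y+k)^2/((y+k)(3y+k)) - 1 = y^2/((y+k)(3y+k))
  have hq : (0:ℝ) < (2 * y + k) ^ 2 / ((y + k) * (3 * y + k)) := by positivity
  have hle := Real.log_le_sub_one_of_pos hq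
  rw [Real.log_div (by positivity) (by positivity), Real.log_mul h1.ne' h3.ne',
    Real.log_pow] at hle
  have heq : (2 * y + (k:ℝ)) ^ 2 / ((y + k) * (3 * y + k)) - 1
      = y ^ 2 / ((y + k) * (3 * y + k)) := by
    field_simp
    ring
  rw [heq] at hle
  have hbd : y ^ 2 / ((y + (k:ℝ)) * (3 * y + k)) ≤ 1 / (k:ℝ) ^ 2 := by
    rw [div_le_div_iff₀ (by positivity) (by positivity)]
    have hy2 : y ^ 2 ≤ 1 := by nlinarith
    have hkk : (k:ℝ) ^ 2 ≤ (y + k) * (3 * y + k) := by nlinarith [mul_pos hy0 (lt_of_lt_of_le zero_lt_one hk')]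
    nlinarith [sq_nonneg (k:ℝ), mul_le_mul_of_nonneg_right hy2 (sq_nonneg (k:ℝ))]
  simp only [u]
  push_cast at hle hbd ⊢
  linarith

lemma u_norm_le {k : ℕ} (hk : 1 ≤ k) {y : ℝ} (hy0 : 0 < y) (hy1 : y ≤ 1) :
    ‖u k y‖ ≤ 1 / (k:ℝ) ^ 2 := by
  rw [Real.norm_eq_abs, abs_le]
  exact ⟨u_lower hk hy0 hy1, le_trans (u_nonpos hk hy0) (by positivity)⟩

lemma summable_shift : Summable (fun m : ℕ => 1 / ((m:ℝ) + 1) ^ 2) := by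
  have h := summable_one_div_nat_pow.mpr (le_refl 2)
  have := (summable_nat_add_iff 1).mpr h
  refine this.congr fun m => ?_
  push_cast
  ring_nf

lemma summable_u {y : ℝ} (hy0 : 0 < y) (hy1 : y ≤ 1) :
    Summable (fun m : ℕ => u (m + 1) y) := by
  refine Summable.of_norm_bounded summable_shift fun m => ?_
  have := u_norm_le (k := m + 1) (Nat.le_add_left 1 m) hy0 hy1
  simpa using this

lemma summable_g {y : ℝ} (hy : y ∈ Ioo (0:ℝ) 1) :
    Summable (fun m : ℕ => g (m + 1) y) := by
  refine Summable.of_norm_bounded (summable_shift.mul_left 2) fun m => ?_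
  have := g_bound (k := m + 1) (Nat.le_add_left 1 m) hy
  simpa [mul_one_div, div_eq_mul_inv] using this

lemma hasDerivAt_u {k : ℕ} (hk : 1 ≤ k) {y : ℝ} (hy : 0 < y) :
    HasDerivAt (u k) (g k y) y := by
  have hk' : (1:ℝ) ≤ (k:ℝ) := by exact_mod_cast hk
  have h1 : y + (k:ℝ) ≠ 0 := by positivity
  have h2 : 2 * y + (k:ℝ) ≠ 0 := by positivity
  have h3 : 3 * y + (k:ℝ) ≠ 0 := by positivity
  have d1 : HasDerivAt (fun z : ℝ => z + (k:ℝ)) 1 y := (hasDerivAt_id y).add_const _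
  have d2 : HasDerivAt (fun z : ℝ => 2 * z + (k:ℝ)) 2 y := by
    simpa using ((hasDerivAt_id y).const_mul (2:ℝ)).add_const ((k:ℝ))
  have d3 : HasDerivAt (fun z : ℝ => 3 * z + (k:ℝ)) 3 y := by
    simpa using ((hasDerivAt_id y).const_mul (3:ℝ)).add_const ((k:ℝ))
  have l1 := d1.log h1
  have l2 := d2.log h2
  have l3 := d3.log h3
  have := (l1.add l3).sub ((l2.const_mul (2:ℝ)))
  refine this.congr_deriv ?_
  simp only [g]
  field_simp
  ring

/-- The combination of log-Gamma values. -/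
noncomputable def G (y : ℝ) : ℝ :=
  2 * Real.log (Real.Gamma (2 * y)) - Real.log (Real.Gamma y) - Real.log (Real.Gamma (3 * y))

lemma log_GammaSeq {s : ℝ} (hs : 0 < s) {n : ℕ} (hn : 1 ≤ n) :
    Real.log (Real.GammaSeq s n)
      = s * Real.log n + Real.log (n.factorial)
        - ∑ j ∈ Finset.range (n + 1), Real.log (s + j) := by
  have hn' : (0:ℝ) < (n:ℝ) := by exact_mod_cast hn
  have hprod : ∀ j ∈ Finset.range (n + 1), s + (j:ℝ) ≠ 0 := by
    intro j _
    positivity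
  rw [Real.GammaSeq, Real.log_div (by positivity) (Finset.prod_ne_zero_iff.mpr hprod),
    Real.log_mul (by positivity) (by exact_mod_cast (Nat.factorial_pos n).ne'),
    Real.log_rpow hn', Real.log_prod hprod]

lemma G_eq {x : ℝ} (hx0 : 0 < x) (hx1 : x ≤ 1) :
    G x = (Real.log 3 - 2 * Real.log 2) + ∑' m : ℕ, u (m + 1) x := by
  -- partial sums expression
  have key : ∀ n : ℕ, 1 ≤ n →
      2 * Real.log (Real.GammaSeq (2 * x) n) - Real.log (Real.GammaSeq x n)
        - Real.log (Real.GammaSeq (3 * x) n)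
      = (Real.log 3 - 2 * Real.log 2) + ∑ m ∈ Finset.range n, u (m + 1) x := by
    intro n hn
    rw [log_GammaSeq hx0 hn, log_GammaSeq (by positivity) hn, log_GammaSeq (by positivity) hn]
    have hsum : ∑ j ∈ Finset.range (n + 1), u j x
        = (Real.log 3 - 2 * Real.log 2) + ∑ m ∈ Finset.range n, u (m + 1) x := by
      rw [Finset.sum_range_succ']
      have hu0 : u 0 x = Real.log 3 - 2 * Real.log 2 := by
        simp only [u, Nat.cast_zero, add_zero]
        rw [Real.log_mul (by norm_num) hx0.ne', Real.log_mul (by norm_num) hx0.ne']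
        ring
      rw [hu0]
      ring
    rw [← hsum]
    have hexpand : ∑ j ∈ Finset.range (n + 1), u j x
        = (∑ j ∈ Finset.range (n + 1), Real.log (x + j))
          + (∑ j ∈ Finset.range (n + 1), Real.log (3 * x + j))
          - 2 * ∑ j ∈ Finset.range (n + 1), Real.log (2 * x + j) := by
      simp only [u, Finset.sum_sub_distrib, Finset.sum_add_distrib, ← Finset.mul_sum]
    rw [hexpand]
    ring
  -- limits
  have hT := (summable_u hx0 hx1).hasSum.tendsto_sum_nat
  have hG2 := ((Real.GammaSeq_tendsto_Gamma (2 * x)).log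
    (Real.Gamma_pos_of_pos (by positivity)).ne')
  have hG1 := ((Real.GammaSeq_tendsto_Gamma x).log (Real.Gamma_pos_of_pos hx0).ne')
  have hG3 := ((Real.GammaSeq_tendsto_Gamma (3 * x)).log
    (Real.Gamma_pos_of_pos (by positivity)).ne')
  have hlhs : Filter.Tendsto
      (fun n : ℕ => 2 * Real.log (Real.GammaSeq (2 * x) n) - Real.log (Real.GammaSeq x n)
        - Real.log (Real.GammaSeq (3 * x) n)) Filter.atTop (nhds (G x)) :=
    ((hG2.const_mul 2).sub hG1).sub hG3
  have hrhs : Filter.Tendsto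
      (fun n : ℕ => (Real.log 3 - 2 * Real.log 2) + ∑ m ∈ Finset.range n, u (m + 1) x)
      Filter.atTop (nhds ((Real.log 3 - 2 * Real.log 2) + ∑' m : ℕ, u (m + 1) x)) :=
    hT.const_add _
  refine tendsto_nhds_unique (hlhs.congr' ?_) hrhs
  filter_upwards [Filter.eventually_ge_atTop 1] with n hn
  exact key n hn

lemma hasDerivAt_log_Gamma {y : ℝ} (hy : 0 < y) :
    HasDerivAt (fun z => Real.log (Real.Gamma z)) (digamma y) y := by
  have hΓ : HasDerivAt Real.Gamma (deriv Real.Gamma y) y := by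
    refine (Real.differentiableAt_Gamma fun m => ?_).hasDerivAt
    have : (0:ℝ) ≤ m := Nat.cast_nonneg m
    intro h; rw [h] at hy; linarith
  exact hΓ.log (Real.Gamma_pos_of_pos hy).ne'

lemma hasDerivAt_G {x : ℝ} (hx : 0 < x) :
    HasDerivAt G (4 * digamma (2 * x) - digamma x - 3 * digamma (3 * x)) x := by
  have h2 : HasDerivAt (fun z : ℝ => Real.log (Real.Gamma (2 * z)))
      (digamma (2 * x) * 2) x := by
    have inner : HasDerivAt (fun z : ℝ => 2 * z) 2 x := by
      simpa using (hasDerivAt_id x).const_mul (2:ℝ)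
    have := (hasDerivAt_log_Gamma (y := 2 * x) (by positivity)).comp x inner
    exact this
  have h1 := hasDerivAt_log_Gamma hx
  have h3 : HasDerivAt (fun z : ℝ => Real.log (Real.Gamma (3 * z)))
      (digamma (3 * x) * 3) x := by
    have inner : HasDerivAt (fun z : ℝ => 3 * z) 3 x := by
      simpa using (hasDerivAt_id x).const_mul (3:ℝ)
    have := (hasDerivAt_log_Gamma (y := 3 * x) (by positivity)).comp x inner
    exact this
  have := ((h2.const_mul (2:ℝ)).sub h1).sub h3
  refine this.congr_deriv ?_
  ring

end DigammaAux

open DigammaAux in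
/-- For all x ∈ (0,1), 4ψ(2x) - ψ(x) - 3ψ(3x) < 0. -/
theorem digamma_combination_neg :
    ∀ x ∈ Ioo (0:ℝ) 1, 4 * digamma (2*x) - digamma x - 3 * digamma (3*x) < 0 := by
  intro x hx
  obtain ⟨hx0, hx1⟩ := hx
  -- the tsum function has the right derivative on Ioo 0 1
  have hderiv_tsum : HasDerivAt (fun z => ∑' m : ℕ, u (m + 1) z)
      (∑' m : ℕ, g (m + 1) x) x := by
    refine hasDerivAt_tsum_of_isPreconnected (summable_shift.mul_left 2) isOpen_Ioo
      (isPreconnected_Ioo) (fun m y hy => hasDerivAt_u (Nat.le_add_left 1 m) hy.1)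
      (fun m y hy => ?_) (show (x:ℝ) ∈ Ioo (0:ℝ) 1 from ⟨hx0, hx1⟩)
      (summable_u hx0 hx1.le) ⟨hx0, hx1⟩
    have := g_bound (k := m + 1) (Nat.le_add_left 1 m) hy
    simpa [mul_one_div, div_eq_mul_inv] using this
  have hF : HasDerivAt (fun z => (Real.log 3 - 2 * Real.log 2) + ∑' m : ℕ, u (m + 1) z)
      (∑' m : ℕ, g (m + 1) x) x := hderiv_tsum.const_add _
  -- G agrees with this function near x
  have hGF : HasDerivAt G (∑' m : ℕ, g (m + 1) x) x := by
    refine hF.congr_of_eventuallyEq ?_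
    filter_upwards [isOpen_Ioo.mem_nhds (show x ∈ Ioo (0:ℝ) 1 from ⟨hx0, hx1⟩)] with y hy
    exact (G_eq hy.1 hy.2.le)
  have huniq := (hasDerivAt_G hx0).unique hGF
  have h2x : 2 * x = 2 * x := rfl
  rw [show 4 * digamma (2*x) - digamma x - 3 * digamma (3*x)
      = 4 * digamma (2 * x) - digamma x - 3 * digamma (3 * x) from rfl, huniq]
  -- the series is strictly negative
  have hlt : ∑' m : ℕ, g (m + 1) x < ∑' _ : ℕ, (0:ℝ) := by
    refine Summable.tsum_lt_tsum (i := 0) (fun m => (g_neg (Nat.le_add_left 1 m) hx0).le)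
      (g_neg (Nat.le_add_left 1 0) hx0) (summable_g ⟨hx0, hx1⟩) summable_zero
  simpa using hlt
end

section
/- Let n ≥ 2 and p > n-1. If R^p ~ Beta(n/p, 1-(n-1)/p) and U^p ~ Beta(1/p, (n-1)/p) are independent, then R·U ~ U(0,1). -/
open MeasureTheory Set Real
open scoped ENNReal NNReal

/-- The Beta(a,b) distribution as a measure on ℝ. -/
noncomputable def betaMeasure (a b : ℝ) : Measure ℝ :=
  (volume.restrict (Ioo (0:ℝ) 1)).withDensity fun x =>
    ENNReal.ofReal (Real.Gamma (a + b) / (Real.Gamma a * Real.Gamma b) *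
      x ^ (a - 1) * (1 - x) ^ (b - 1))

lemma real_betaIntegral {u v : ℝ} (hu : 0 < u) (hv : 0 < v) :
    ∫ x in (0:ℝ)..1, x ^ (u-1) * (1-x) ^ (v-1) = Gamma u * Gamma v / Gamma (u+v) := by
  have h := Complex.Gamma_mul_Gamma_eq_betaIntegral (s := (u:ℂ)) (t := (v:ℂ))
    (by simpa using hu) (by simpa using hv)
  have hβ : Complex.betaIntegral u v =
      ((∫ x in (0:ℝ)..1, x ^ (u-1) * (1-x) ^ (v-1) : ℝ) : ℂ) := by
    rw [Complex.betaIntegral, ← intervalIntegral.integral_ofReal]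
    refine intervalIntegral.integral_congr_ae (MeasureTheory.ae_of_all _ fun x hx => ?_)
    rw [uIoc_of_le (by norm_num : (0:ℝ) ≤ 1)] at hx
    push_cast
    rw [Complex.ofReal_cpow hx.1.le, Complex.ofReal_cpow (by linarith [hx.2] : (0:ℝ) ≤ 1 - x)]
    push_cast
    ring
  rw [hβ, show ((u:ℂ)+(v:ℂ)) = ((u+v : ℝ):ℂ) by push_cast; ring, Complex.Gamma_ofReal,
    Complex.Gamma_ofReal, Complex.Gamma_ofReal, ← Complex.ofReal_mul, ← Complex.ofReal_mul] at h
  have h2 := Complex.ofReal_injective h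
  have hΓ : (0:ℝ) < Gamma (u+v) := Gamma_pos_of_pos (by linarith)
  field_simp
  linarith [h2]

lemma betaMeasure_compl (a b : ℝ) : betaMeasure a b (Ioo (0:ℝ) 1)ᶜ = 0 := by
  rw [betaMeasure, withDensity_apply _ measurableSet_Ioo.compl,
    Measure.restrict_restrict measurableSet_Ioo.compl, compl_inter_self]
  simp

lemma betaDensity_measurable (a b : ℝ) : Measurable fun x : ℝ =>
    (Real.Gamma (a + b) / (Real.Gamma a * Real.Gamma b) * x ^ (a - 1) * (1 - x) ^ (b - 1)).toNNReal := by
  fun_prop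

lemma betaMeasure_rpow (a b s : ℝ) (ha : 0 < a) (hb : 0 < b) (hs : 0 ≤ s) :
    ∫ x, x ^ s ∂(betaMeasure a b)
      = Gamma (a+s) * Gamma (a+b) / (Gamma a * Gamma (a+s+b)) := by
  have hc : 0 < Gamma (a + b) / (Gamma a * Gamma b) :=
    div_pos (Gamma_pos_of_pos (by linarith))
      (mul_pos (Gamma_pos_of_pos ha) (Gamma_pos_of_pos hb))
  rw [betaMeasure]
  rw [show (fun x : ℝ => ENNReal.ofReal (Gamma (a + b) / (Gamma a * Gamma b) *
      x ^ (a - 1) * (1 - x) ^ (b - 1))) = fun x : ℝ => ((Gamma (a + b) / (Gamma a * Gamma b) *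
      x ^ (a - 1) * (1 - x) ^ (b - 1)).toNNReal : ℝ≥0∞) from rfl]
  rw [integral_withDensity_eq_integral_smul (betaDensity_measurable a b)]
  have key : ∫ x in Ioo (0:ℝ) 1, (Gamma (a + b) / (Gamma a * Gamma b) *
      x ^ (a - 1) * (1 - x) ^ (b - 1)).toNNReal • x ^ s
      = ∫ x in Ioo (0:ℝ) 1, Gamma (a + b) / (Gamma a * Gamma b) *
        (x ^ (a+s-1) * (1 - x) ^ (b - 1)) := by
    refine setIntegral_congr_fun measurableSet_Ioo fun x hx => ?_
    have h1 : 0 < x := hx.1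
    have h2 : (0:ℝ) ≤ 1 - x := by linarith [hx.2]
    rw [NNReal.smul_def, Real.coe_toNNReal _ (by positivity), smul_eq_mul]
    rw [show a + s - 1 = (a-1) + s by ring, Real.rpow_add h1]
    ring
  rw [key, integral_const_mul, ← integral_Ioc_eq_integral_Ioo,
    ← intervalIntegral.integral_of_le (by norm_num : (0:ℝ) ≤ 1),
    real_betaIntegral (by linarith) hb]
  have h3 : Gamma (a+s+b) ≠ 0 := (Gamma_pos_of_pos (by linarith)).ne'
  have h4 : Gamma a ≠ 0 := (Gamma_pos_of_pos ha).ne'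
  have h5 : Gamma b ≠ 0 := (Gamma_pos_of_pos hb).ne'
  field_simp
lemma map_beta_moment {Ω : Type*} [MeasurableSpace Ω] (μ : Measure Ω)
    {Z : Ω → ℝ} (hZ : Measurable Z) (hZpos : ∀ᵐ ω ∂μ, 0 ≤ Z ω)
    {p a b : ℝ} (hp : 0 < p) (ha : 0 < a) (hb : 0 < b)
    (hmap : Measure.map (fun ω => (Z ω) ^ p) μ = betaMeasure a b) (k : ℕ) :
    ∫ ω, (Z ω) ^ k ∂μ
      = Gamma (a + k/p) * Gamma (a+b) / (Gamma a * Gamma (a + k/p + b)) := by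
  have hZp : Measurable fun ω => (Z ω) ^ p :=
    (Real.continuous_rpow_const hp.le).measurable.comp hZ
  have hae : ∀ᵐ ω ∂μ, (Z ω) ^ k = ((Z ω) ^ p) ^ ((k:ℝ)/p) := by
    filter_upwards [hZpos] with ω hω
    rw [← Real.rpow_natCast (Z ω) k, ← Real.rpow_mul hω]
    congr 1
    field_simp
  rw [integral_congr_ae hae]
  have hmeas : AEStronglyMeasurable (fun x : ℝ => x ^ ((k:ℝ)/p))
      (Measure.map (fun ω => (Z ω) ^ p) μ) :=
    (Real.continuous_rpow_const (by positivity)).measurable.aestronglyMeasurable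
  rw [← integral_map hZp.aemeasurable hmeas, hmap,
    betaMeasure_rpow a b _ ha hb (by positivity)]

lemma ae_mem_Ioo_of_map {Ω : Type*} [MeasurableSpace Ω] (μ : Measure Ω)
    {Z : Ω → ℝ} (hZ : Measurable Z) (hZpos : ∀ᵐ ω ∂μ, 0 ≤ Z ω)
    {p a b : ℝ} (hp : 0 < p)
    (hmap : Measure.map (fun ω => (Z ω) ^ p) μ = betaMeasure a b) :
    ∀ᵐ ω ∂μ, Z ω ∈ Ioo (0:ℝ) 1 := by
  have hZp : Measurable fun ω => (Z ω) ^ p :=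
    (Real.continuous_rpow_const hp.le).measurable.comp hZ
  have h0 : μ ((fun ω => (Z ω) ^ p) ⁻¹' (Ioo (0:ℝ) 1)ᶜ) = 0 := by
    rw [← Measure.map_apply hZp measurableSet_Ioo.compl, hmap, betaMeasure_compl]
  have hmem : ∀ᵐ ω ∂μ, (Z ω) ^ p ∈ Ioo (0:ℝ) 1 := by
    rw [ae_iff]
    exact h0
  filter_upwards [hmem, hZpos] with ω h1 h2
  constructor
  · rcases lt_or_eq_of_le h2 with h | h
    · exact h
    · exfalso
      rw [← h, Real.zero_rpow hp.ne'] at h1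
      exact lt_irrefl 0 h1.1
  · by_contra h
    push_neg at h
    have : 1 ≤ (Z ω) ^ p := Real.one_le_rpow h hp.le
    linarith [h1.2]


lemma integrable_of_ae_Icc {ν : Measure ℝ} [IsFiniteMeasure ν] {f : ℝ → ℝ}
    (hf : Continuous f) (hν : ∀ᵐ x ∂ν, x ∈ Icc (0:ℝ) 1) : Integrable f ν := by
  obtain ⟨x0, -, hx0⟩ := isCompact_Icc.exists_isMaxOn (f := fun x => |f x|)
    (nonempty_Icc.2 zero_le_one) hf.abs.continuousOn
  refine (integrable_const (|f x0|)).mono' hf.aestronglyMeasurable ?_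
  filter_upwards [hν] with x hx
  simpa using hx0 hx

lemma measure_eq_of_moments (ν₁ ν₂ : Measure ℝ) [IsProbabilityMeasure ν₁]
    [IsProbabilityMeasure ν₂]
    (h₁ : ∀ᵐ x ∂ν₁, x ∈ Icc (0:ℝ) 1) (h₂ : ∀ᵐ x ∂ν₂, x ∈ Icc (0:ℝ) 1)
    (hmom : ∀ k : ℕ, ∫ x, x ^ k ∂ν₁ = ∫ x, x ^ k ∂ν₂) : ν₁ = ν₂ := by
  have hpoly : ∀ q : Polynomial ℝ, ∫ x, q.eval x ∂ν₁ = ∫ x, q.eval x ∂ν₂ := by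
    intro q
    have he : ∀ x : ℝ, q.eval x = ∑ i ∈ Finset.range (q.natDegree + 1), q.coeff i * x ^ i :=
      q.eval_eq_sum_range
    simp_rw [he]
    rw [integral_finset_sum _ fun i _ =>
        (integrable_of_ae_Icc (continuous_pow i) h₁).const_mul _,
      integral_finset_sum _ fun i _ =>
        (integrable_of_ae_Icc (continuous_pow i) h₂).const_mul _]
    exact Finset.sum_congr rfl fun i _ => by rw [integral_const_mul, integral_const_mul, hmom i]
  have hcont : ∀ g : ℝ → ℝ, Continuous g → ∫ x, g x ∂ν₁ = ∫ x, g x ∂ν₂ := by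
    intro g hg
    have hint1 : Integrable g ν₁ := integrable_of_ae_Icc hg h₁
    have hint2 : Integrable g ν₂ := integrable_of_ae_Icc hg h₂
    have key : ∀ ε : ℝ, 0 < ε → |(∫ x, g x ∂ν₁) - ∫ x, g x ∂ν₂| ≤ 2 * ε := by
      intro ε hε
      obtain ⟨q', hq'⟩ := ContinuousMap.exists_mem_subalgebra_near_continuous_of_separatesPoints
        (polynomialFunctions (Icc (0:ℝ) 1)) (polynomialFunctions_separatesPoints _)
        (fun x : Icc (0:ℝ) 1 => g x) (hg.comp continuous_subtype_val) ε hε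
      obtain ⟨q, hq⟩ : ∃ q : Polynomial ℝ,
          ∀ x : Icc (0:ℝ) 1, (q' : C(Icc (0:ℝ) 1, ℝ)) x = q.eval (x : ℝ) := by
        have hmem : (q' : C(Icc (0:ℝ) 1, ℝ)) ∈
            (polynomialFunctions (Icc (0:ℝ) 1) : Set C(Icc (0:ℝ) 1, ℝ)) := q'.2
        rw [polynomialFunctions_coe] at hmem
        obtain ⟨q, hq⟩ := hmem
        exact ⟨q, fun x => by rw [← hq]; simp⟩
      have hbound : ∀ x ∈ Icc (0:ℝ) 1, |g x - q.eval x| ≤ ε := by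
        intro x hx
        have := hq' ⟨x, hx⟩
        rw [hq ⟨x, hx⟩] at this
        rw [abs_sub_comm]
        simpa using this.le
      have hq1 : Integrable q.eval ν₁ := integrable_of_ae_Icc q.continuous h₁
      have hq2 : Integrable q.eval ν₂ := integrable_of_ae_Icc q.continuous h₂
      have d1 : |(∫ x, g x ∂ν₁) - ∫ x, q.eval x ∂ν₁| ≤ ε := by
        rw [← integral_sub hint1 hq1]
        calc |∫ x, (g x - q.eval x) ∂ν₁| ≤ ε * (ν₁ univ).toReal := by
              rw [← Real.norm_eq_abs]
              refine norm_integral_le_of_norm_le_const ?_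
              filter_upwards [h₁] with x hx
              simpa using hbound x hx
          _ = ε := by simp
      have d2 : |(∫ x, g x ∂ν₂) - ∫ x, q.eval x ∂ν₂| ≤ ε := by
        rw [← integral_sub hint2 hq2]
        calc |∫ x, (g x - q.eval x) ∂ν₂| ≤ ε * (ν₂ univ).toReal := by
              rw [← Real.norm_eq_abs]
              refine norm_integral_le_of_norm_le_const ?_
              filter_upwards [h₂] with x hx
              simpa using hbound x hx
          _ = ε := by simp
      have := hpoly q
      calc |(∫ x, g x ∂ν₁) - ∫ x, g x ∂ν₂|
          = |((∫ x, g x ∂ν₁) - ∫ x, q.eval x ∂ν₁)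
            - ((∫ x, g x ∂ν₂) - ∫ x, q.eval x ∂ν₂)| := by rw [this]; ring_nf
        _ ≤ |(∫ x, g x ∂ν₁) - ∫ x, q.eval x ∂ν₁|
            + |(∫ x, g x ∂ν₂) - ∫ x, q.eval x ∂ν₂| := abs_sub _ _
        _ ≤ ε + ε := add_le_add d1 d2
        _ = 2 * ε := by ring
    by_contra hne
    have hδ : 0 < |(∫ x, g x ∂ν₁) - ∫ x, g x ∂ν₂| := abs_pos.2 (sub_ne_zero.2 hne)
    have := key (|(∫ x, g x ∂ν₁) - ∫ x, g x ∂ν₂| / 4) (by linarith)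
    linarith
  refine ext_of_forall_lintegral_eq_of_IsFiniteMeasure fun f => ?_
  have hg : Continuous fun x : ℝ => ((f x : ℝ≥0) : ℝ) := NNReal.continuous_coe.comp f.continuous
  have e1 : ∫⁻ x, (f x : ℝ≥0∞) ∂ν₁ = ENNReal.ofReal (∫ x, ((f x : ℝ≥0) : ℝ) ∂ν₁) := by
    rw [ofReal_integral_eq_lintegral_ofReal (integrable_of_ae_Icc hg h₁)
      (ae_of_all _ fun x => (f x).2)]
    simp_rw [ENNReal.ofReal_coe_nnreal]
  have e2 : ∫⁻ x, (f x : ℝ≥0∞) ∂ν₂ = ENNReal.ofReal (∫ x, ((f x : ℝ≥0) : ℝ) ∂ν₂) := by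
    rw [ofReal_integral_eq_lintegral_ofReal (integrable_of_ae_Icc hg h₂)
      (ae_of_all _ fun x => (f x).2)]
    simp_rw [ENNReal.ofReal_coe_nnreal]
  rw [e1, e2, hcont _ hg]

/-- Sufficiency: if n ≥ 2, p > n-1, R^p ~ Beta(n/p, 1-(n-1)/p) and
U^p ~ Beta(1/p,(n-1)/p) are independent (R, U ≥ 0), then R·U ~ U(0,1). -/
theorem lp_copula_sufficient_condition
    {Ω : Type*} [MeasurableSpace Ω] (μ : Measure Ω) [IsProbabilityMeasure μ]
    (n : ℕ) (hn : 2 ≤ n) (p : ℝ) (hp : (n : ℝ) - 1 < p)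
    (R U : Ω → ℝ) (hR : Measurable R) (hU : Measurable U)
    (hRpos : ∀ᵐ ω ∂μ, 0 ≤ R ω) (hUpos : ∀ᵐ ω ∂μ, 0 ≤ U ω)
    (hindep : ProbabilityTheory.IndepFun R U μ)
    (hRmap : Measure.map (fun ω => (R ω) ^ p) μ = betaMeasure (n/p) (1 - (n - 1)/p))
    (hUmap : Measure.map (fun ω => (U ω) ^ p) μ = betaMeasure (1/p) ((n - 1)/p)) :
    Measure.map (fun ω => R ω * U ω) μ = volume.restrict (Ioo (0:ℝ) 1) := by
  have hn1 : (1:ℝ) ≤ (n:ℝ) - 1 := by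
    have : (2:ℝ) ≤ n := by exact_mod_cast hn
    linarith
  have hppos : 0 < p := by linarith
  have ha1 : 0 < (n:ℝ)/p := div_pos (by linarith) hppos
  have hb1 : 0 < 1 - ((n:ℝ) - 1)/p := by
    rw [sub_pos, div_lt_one hppos]; exact hp
  have ha2 : 0 < 1/p := by positivity
  have hb2 : 0 < ((n:ℝ)-1)/p := div_pos (by linarith) hppos
  have hRin := ae_mem_Ioo_of_map μ hR hRpos hppos hRmap
  have hUin := ae_mem_Ioo_of_map μ hU hUpos hppos hUmap
  have hRU : Measurable fun ω => R ω * U ω := hR.mul hU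
  have i1 : IsProbabilityMeasure (Measure.map (fun ω => R ω * U ω) μ) :=
    Measure.isProbabilityMeasure_map hRU.aemeasurable
  have i2 : IsProbabilityMeasure (volume.restrict (Ioo (0:ℝ) 1)) := by
    constructor
    rw [Measure.restrict_apply_univ, Real.volume_Ioo]
    norm_num
  have h₁ : ∀ᵐ x ∂(Measure.map (fun ω => R ω * U ω) μ), x ∈ Icc (0:ℝ) 1 := by
    refine (ae_map_iff hRU.aemeasurable measurableSet_Icc).2 ?_
    filter_upwards [hRin, hUin] with ω h1 h2
    exact ⟨mul_nonneg h1.1.le h2.1.le, mul_le_one₀ h1.2.le h2.1.le h2.2.le⟩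
  have h₂ : ∀ᵐ x ∂(volume.restrict (Ioo (0:ℝ) 1)), x ∈ Icc (0:ℝ) 1 := by
    filter_upwards [ae_restrict_mem measurableSet_Ioo] with x hx
    exact ⟨hx.1.le, hx.2.le⟩
  refine measure_eq_of_moments _ _ h₁ h₂ fun k => ?_
  have hRHS : ∫ x, x ^ k ∂(volume.restrict (Ioo (0:ℝ) 1)) = ((k:ℝ)+1)⁻¹ := by
    rw [← integral_Ioc_eq_integral_Ioo,
      ← intervalIntegral.integral_of_le (by norm_num : (0:ℝ) ≤ 1), integral_pow]
    simp
  have hL1 : ∫ x, x ^ k ∂(Measure.map (fun ω => R ω * U ω) μ) = ∫ ω, (R ω * U ω) ^ k ∂μ :=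
    integral_map hRU.aemeasurable (continuous_pow k).aestronglyMeasurable
  have hkR : Integrable (fun ω => R ω ^ k) μ := by
    refine (integrable_const (1:ℝ)).mono' (hR.pow_const k).aestronglyMeasurable ?_
    filter_upwards [hRin] with ω h
    rw [Real.norm_eq_abs, abs_pow, abs_of_nonneg h.1.le]
    exact pow_le_one₀ h.1.le h.2.le
  have hkU : Integrable (fun ω => U ω ^ k) μ := by
    refine (integrable_const (1:ℝ)).mono' (hU.pow_const k).aestronglyMeasurable ?_
    filter_upwards [hUin] with ω h
    rw [Real.norm_eq_abs, abs_pow, abs_of_nonneg h.1.le]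
    exact pow_le_one₀ h.1.le h.2.le
  have hik : ProbabilityTheory.IndepFun (fun ω => R ω ^ k) (fun ω => U ω ^ k) μ :=
    hindep.comp (measurable_id.pow_const k) (measurable_id.pow_const k)
  have hmul : ∫ ω, (R ω * U ω) ^ k ∂μ = (∫ ω, R ω ^ k ∂μ) * ∫ ω, U ω ^ k ∂μ := by
    simp_rw [mul_pow]
    exact ProbabilityTheory.IndepFun.integral_fun_mul_eq_mul_integral hik hkR.1 hkU.1
  have hmR := map_beta_moment μ hR hRpos hppos ha1 hb1 hRmap k
  have hmU := map_beta_moment μ hU hUpos hppos ha2 hb2 hUmap k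
  rw [hL1, hmul, hmR, hmU, hRHS]
  have hc : (0:ℝ) ≤ (k:ℝ) := Nat.cast_nonneg k
  have hA : (n:ℝ)/p + (1 - ((n:ℝ)-1)/p) = 1/p + 1 := by field_simp; try ring
  have hB : (n:ℝ)/p + (k:ℝ)/p + (1 - ((n:ℝ)-1)/p) = (1+(k:ℝ))/p + 1 := by field_simp; try ring
  have hC : 1/p + ((n:ℝ)-1)/p = (n:ℝ)/p := by field_simp; try ring
  have hD : 1/p + (k:ℝ)/p + ((n:ℝ)-1)/p = (n:ℝ)/p + (k:ℝ)/p := by field_simp; try ring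
  have hE : 1/p + (k:ℝ)/p = (1+(k:ℝ))/p := by field_simp; try ring
  have h1c : 0 < (1+(k:ℝ))/p := div_pos (by linarith) hppos
  rw [hA, hB, hC, hD, hE, Real.Gamma_add_one ha2.ne', Real.Gamma_add_one h1c.ne']
  have g1 : Gamma ((n:ℝ)/p + (k:ℝ)/p) ≠ 0 := (Gamma_pos_of_pos (by positivity)).ne'
  have g2 : Gamma ((n:ℝ)/p) ≠ 0 := (Gamma_pos_of_pos ha1).ne'
  have g3 : Gamma (1/p) ≠ 0 := (Gamma_pos_of_pos ha2).ne'
  have g4 : Gamma ((1+(k:ℝ))/p) ≠ 0 := (Gamma_pos_of_pos h1c).ne'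
  have g5 : (1:ℝ) + (k:ℝ) ≠ 0 := by positivity
  field_simp
  ring
end

section
/- Let U₁,...,Uₙ be i.i.d. U(0,1) random variables, M = max{U₁,...,Uₙ}, and Vᵢ = Uᵢ/M. Then for each i, P(Vᵢ = 1) = 1/n, and conditional on Vᵢ < 1, Vᵢ is uniform on (0,1); i.e., the law of Vᵢ is (1/n)δ₁ + ((n-1)/n)·U(0,1). -/
open MeasureTheory Set Real ProbabilityTheory ENNReal


lemma prob_rho : IsProbabilityMeasure (volume.restrict (Ioo (0:ℝ) 1)) :=
  ⟨by simp [Real.volume_Ioo]⟩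

lemma rho_Iic {a : ℝ} (ha : a ≤ 1) :
    (volume.restrict (Ioo (0:ℝ) 1)) (Iic a) = ENNReal.ofReal a := by
  rw [Measure.restrict_apply measurableSet_Iic]
  refine le_antisymm ?_ ?_
  · calc volume (Iic a ∩ Ioo 0 1) ≤ volume (Ioc 0 a) := by
          refine measure_mono fun x hx => ⟨hx.2.1, hx.1⟩
        _ = ENNReal.ofReal a := by rw [Real.volume_Ioc, sub_zero]
  · calc ENNReal.ofReal a = volume (Ioo 0 a) := by rw [Real.volume_Ioo, sub_zero]
        _ ≤ volume (Iic a ∩ Ioo 0 1) := by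
          refine measure_mono fun x hx => ⟨hx.2.le, hx.1, lt_of_lt_of_le hx.2 ha⟩

lemma iSup_split_max {m : ℕ} (i : Fin (m+1)) (b : Fin (m+1) → ℝ) (hb : ∀ j, 0 ≤ b j) :
    (⨆ j, b j) = max (b i) (⨆ k, b (i.succAbove k)) := by
  have hbdd : BddAbove (range b) := (Set.finite_range b).bddAbove
  have hbdd2 : BddAbove (range fun k => b (i.succAbove k)) := (Set.finite_range _).bddAbove
  apply le_antisymm
  · refine ciSup_le fun j => ?_
    rcases eq_or_ne j i with rfl | hj
    · exact le_max_left _ _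
    · obtain ⟨k, rfl⟩ := Fin.exists_succAbove_eq hj
      exact le_trans (le_ciSup hbdd2 k) (le_max_right _ _)
  · refine max_le (le_ciSup hbdd i) (Real.iSup_le (fun k => le_ciSup hbdd _) ?_)
    exact le_trans (hb i) (le_ciSup hbdd i)

lemma ae_mem_box (k : ℕ) :
    ∀ᵐ x ∂(Measure.pi fun _ : Fin k => volume.restrict (Ioo (0:ℝ) 1)),
      ∀ j, x j ∈ Ioo (0:ℝ) 1 := by
  haveI := prob_rho
  rw [ae_iff]
  have h : {x : Fin k → ℝ | ¬ ∀ j, x j ∈ Ioo (0:ℝ) 1}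
      = (univ.pi fun _ => Ioo (0:ℝ) 1)ᶜ := by
    ext x; simp [mem_pi]
  rw [h, measure_compl (MeasurableSet.univ_pi fun _ => measurableSet_Ioo)
    (measure_ne_top _ _), Measure.pi_pi]
  simp [Real.volume_Ioo]
lemma pow_lintegral :
    ∀ m : ℕ, ∫⁻ u in Ioo (0:ℝ) 1, ENNReal.ofReal u ^ m = 1 / ((m:ℝ≥0∞) + 1) := by
  intro m
  have h1 : ∫⁻ u in Ioo (0:ℝ) 1, ENNReal.ofReal u ^ m
      = ∫⁻ u in Ioo (0:ℝ) 1, ENNReal.ofReal (u ^ m) := by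
    refine setLIntegral_congr_fun measurableSet_Ioo (fun u hu => ?_)
    rw [ENNReal.ofReal_pow hu.1.le]
  have hint : IntegrableOn (fun u : ℝ => u ^ m) (Ioo (0:ℝ) 1) volume :=
    (((continuous_pow m).continuousOn).integrableOn_Icc).mono_set Ioo_subset_Icc_self
  have hnn : 0 ≤ᵐ[volume.restrict (Ioo (0:ℝ) 1)] fun u : ℝ => u ^ m :=
    (ae_restrict_iff' measurableSet_Ioo).2 (ae_of_all _ fun u hu => pow_nonneg hu.1.le m)
  rw [h1, ← ofReal_integral_eq_lintegral_ofReal hint hnn]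
  have h2 : ∫ u in Ioo (0:ℝ) 1, u ^ m = 1 / ((m:ℝ) + 1) := by
    rw [← integral_Ioc_eq_integral_Ioo, ← intervalIntegral.integral_of_le zero_le_one,
      integral_pow]
    norm_num
  rw [h2, ENNReal.ofReal_div_of_pos (by positivity), ENNReal.ofReal_one,
    ENNReal.ofReal_add (by positivity) zero_le_one, ENNReal.ofReal_natCast,
    ENNReal.ofReal_one]

lemma lint_sup_pi (m : ℕ) :
    ∫⁻ x : Fin m → ℝ, ENNReal.ofReal (⨆ j, x j)
      ∂(Measure.pi fun _ : Fin m => volume.restrict (Ioo (0:ℝ) 1))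
    = (m : ℝ≥0∞) / ((m:ℝ≥0∞) + 1) := by
  haveI := prob_rho
  set ν := Measure.pi fun _ : Fin m => volume.restrict (Ioo (0:ℝ) 1) with hν
  have hbox := ae_mem_box m
  have fmble : Measurable fun x : Fin m → ℝ => ⨆ j, x j :=
    Measurable.iSup fun j => measurable_pi_apply j
  have fnn : 0 ≤ᵐ[ν] fun x : Fin m → ℝ => ⨆ j, x j := by
    filter_upwards [hbox] with x hx
    exact Real.iSup_nonneg fun j => (hx j).1.le
  rw [lintegral_eq_lintegral_meas_lt ν fnn fmble.aemeasurable]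
  have hun : Ioi (0:ℝ) = Ioo 0 1 ∪ Ici 1 := (Ioo_union_Ici_eq_Ioi zero_lt_one).symm
  have hdisj : Disjoint (Ioo (0:ℝ) 1) (Ici 1) :=
    Set.disjoint_left.2 fun u hu h1 => absurd h1 (not_le.2 hu.2)
  rw [hun, lintegral_union measurableSet_Ici hdisj]
  have hnull : ν {x : Fin m → ℝ | ¬ ∀ j, x j ∈ Ioo (0:ℝ) 1} = 0 := ae_iff.1 hbox
  have h2 : ∫⁻ u in Ici (1:ℝ), ν {x | u < ⨆ j, x j} = 0 := by
    rw [setLIntegral_congr_fun measurableSet_Ici (fun u hu => ?_),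
      lintegral_zero]
    refine measure_mono_null (fun x hx => ?_) hnull
    intro hmem
    exact absurd (Real.iSup_le (fun j => (hmem j).2.le) zero_le_one)
      (not_le.2 (lt_of_le_of_lt hu hx))
  rw [h2, add_zero]
  have h1 : ∫⁻ u in Ioo (0:ℝ) 1, ν {x | u < ⨆ j, x j}
      = ∫⁻ u in Ioo (0:ℝ) 1, (1 - ENNReal.ofReal u ^ m) := by
    refine setLIntegral_congr_fun measurableSet_Ioo (fun u hu => ?_)
    have hset : {x : Fin m → ℝ | ⨆ j, x j ≤ u} = univ.pi fun _ => Iic u := by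
      ext x
      simp only [mem_setOf_eq, mem_pi, mem_univ, forall_true_left, mem_Iic, true_implies]
      constructor
      · intro h j
        exact le_trans (le_ciSup ((Set.finite_range x).bddAbove) j) h
      · intro h
        exact Real.iSup_le h hu.1.le
    have hcompl : {x : Fin m → ℝ | u < ⨆ j, x j} = {x : Fin m → ℝ | ⨆ j, x j ≤ u}ᶜ := by
      ext x; simp [not_le]
    rw [hcompl, hset,
      measure_compl (MeasurableSet.univ_pi fun _ => measurableSet_Iic) (measure_ne_top _ _),
      Measure.pi_pi, measure_univ]
    congr 1
    simp [rho_Iic hu.2.le]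
  rw [h1]
  have hmeas : Measurable fun u : ℝ => ENNReal.ofReal u ^ m :=
    (ENNReal.measurable_ofReal.comp measurable_id).pow_const m
  have hle : (fun u : ℝ => ENNReal.ofReal u ^ m)
      ≤ᵐ[volume.restrict (Ioo (0:ℝ) 1)] fun _ => 1 :=
    (ae_restrict_iff' measurableSet_Ioo).2 (ae_of_all _ fun u hu =>
      pow_le_one' (ENNReal.ofReal_le_one.2 hu.2.le) m)
  have hfin : ∫⁻ u in Ioo (0:ℝ) 1, ENNReal.ofReal u ^ m ≠ ∞ := by
    rw [pow_lintegral m]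
    exact (ENNReal.div_lt_top one_ne_top (by simp : ((m:ℝ≥0∞) + 1) ≠ 0)).ne
  rw [lintegral_sub hmeas hfin hle, lintegral_one, Measure.restrict_apply_univ,
    Real.volume_Ioo, pow_lintegral m]
  have hne : ((m:ℝ≥0∞) + 1) ≠ 0 := (by simp : ((m:ℝ≥0∞) + 1) ≠ 0)
  have hnt : ((m:ℝ≥0∞) + 1) ≠ ∞ := by
    exact ENNReal.add_ne_top.2 ⟨ENNReal.natCast_ne_top m, one_ne_top⟩
  refine (ENNReal.eq_sub_of_add_eq ?_ ?_).symm
  · exact (ENNReal.div_lt_top one_ne_top hne).ne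
  · rw [ENNReal.div_add_div_same, ENNReal.div_self hne hnt]
    simp

lemma div_le_iff_box {m : ℕ} (i : Fin (m+1)) (t : ℝ) (ht : t < 1) (x : Fin (m+1) → ℝ)
    (hx : ∀ j, x j ∈ Ioo (0:ℝ) 1) :
    x i / (⨆ j, x j) ≤ t ↔ x i ≤ t * ⨆ k, x (i.succAbove k) := by
  have h0 : ∀ j, 0 ≤ x j := fun j => (hx j).1.le
  have hsplit := iSup_split_max i x h0
  have hrest0 : 0 ≤ ⨆ k, x (i.succAbove k) := Real.iSup_nonneg fun k => h0 _
  have hisup : x i ≤ ⨆ j, x j := le_ciSup ((Set.finite_range x).bddAbove) i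
  have hpos : 0 < ⨆ j, x j := lt_of_lt_of_le (hx i).1 hisup
  rw [div_le_iff₀ hpos]
  constructor
  · intro h
    have hlt : x i < ⨆ j, x j := lt_of_le_of_lt h (by nlinarith)
    have hle : x i ≤ ⨆ k, x (i.succAbove k) := by
      by_contra hcon
      push_neg at hcon
      rw [hsplit, max_eq_left hcon.le] at hlt
      exact lt_irrefl _ hlt
    rw [hsplit, max_eq_right hle] at h
    exact h
  · intro h
    have ht0 : 0 < t := by
      by_contra hcon
      push_neg at hcon
      have : t * (⨆ k, x (i.succAbove k)) ≤ 0 := mul_nonpos_of_nonpos_of_nonneg hcon hrest0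
      exact absurd (lt_of_lt_of_le (hx i).1 h) (not_lt.2 this)
    refine le_trans h (mul_le_mul_of_nonneg_left ?_ ht0.le)
    rw [hsplit]
    exact le_max_right _ _


/-- If U₁,...,Uₙ are i.i.d. U(0,1), M = max Uᵢ and Vᵢ = Uᵢ/M, then the law of each
Vᵢ is (1/n)·δ₁ + ((n-1)/n)·U(0,1); in particular P(Vᵢ = 1) = 1/n and conditionally
on Vᵢ < 1 it is uniform. -/
theorem max_normalized_uniform_law
    {Ω : Type*} [MeasurableSpace Ω] (μ : Measure Ω) [IsProbabilityMeasure μ]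
    (n : ℕ) (hn : 1 ≤ n) (U : Fin n → Ω → ℝ) (hU : ∀ i, Measurable (U i))
    (hiid : iIndepFun U μ)
    (hunif : ∀ i, Measure.map (U i) μ = volume.restrict (Ioo (0:ℝ) 1)) :
    ∀ i, Measure.map (fun ω => U i ω / (⨆ j, U j ω)) μ =
      ((n : ℝ≥0∞))⁻¹ • Measure.dirac (1:ℝ) +
        (((n : ℝ≥0∞) - 1) / n) • volume.restrict (Ioo (0:ℝ) 1) := by
  obtain ⟨m, rfl⟩ : ∃ m, n = m + 1 := ⟨n - 1, (Nat.succ_pred_eq_of_pos hn).symm⟩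
  intro i
  haveI := prob_rho
  set ρ : Measure ℝ := volume.restrict (Ioo (0:ℝ) 1) with hρ
  set Pm : Measure (Fin (m+1) → ℝ) := Measure.pi fun _ => ρ with hPm
  -- joint law
  have hF : Measurable fun ω => (fun j => U j ω) :=
    measurable_pi_lambda _ fun j => hU j
  have hjoint : Measure.map (fun ω => (fun j => U j ω)) μ = Pm := by
    refine (Measure.pi_eq fun s hs => ?_).symm
    rw [Measure.map_apply hF (MeasurableSet.univ_pi hs)]
    have hpre : (fun ω => (fun j => U j ω)) ⁻¹' (univ.pi s) = ⋂ j ∈ Finset.univ, U j ⁻¹' s j := by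
      ext ω; simp [mem_pi]
    rw [hpre, hiid.measure_inter_preimage_eq_mul Finset.univ (fun j _ => hs j)]
    exact Finset.prod_congr rfl fun j _ => by
      rw [← Measure.map_apply (hU j) (hs j), hunif j]
  have hsup : Measurable fun x : Fin (m+1) → ℝ => ⨆ j, x j :=
    Measurable.iSup fun j => measurable_pi_apply j
  have hg : Measurable fun x : Fin (m+1) → ℝ => x i / ⨆ j, x j :=
    (measurable_pi_apply i).div hsup
  have hcomp : (fun ω => U i ω / ⨆ j, U j ω)
      = (fun x : Fin (m+1) → ℝ => x i / ⨆ j, x j) ∘ (fun ω => (fun j => U j ω)) := rfl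
  rw [hcomp, ← Measure.map_map hg hF, hjoint]
  -- now work on the pi measure
  haveI : IsProbabilityMeasure Pm := by rw [hPm]; infer_instance
  haveI : IsProbabilityMeasure (Measure.map (fun x : Fin (m+1) → ℝ => x i / ⨆ j, x j) Pm) :=
    Measure.isProbabilityMeasure_map hg.aemeasurable
  have hNne : ((m:ℝ≥0∞) + 1) ≠ 0 := by simp
  have hNnt : ((m:ℝ≥0∞) + 1) ≠ ∞ :=
    ENNReal.add_ne_top.2 ⟨ENNReal.natCast_ne_top m, one_ne_top⟩
  have hcast : ((m + 1 : ℕ) : ℝ≥0∞) = (m : ℝ≥0∞) + 1 := by push_cast; ring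
  have hsub : ((m + 1 : ℕ) : ℝ≥0∞) - 1 = (m : ℝ≥0∞) := by
    rw [hcast, ENNReal.add_sub_cancel_right one_ne_top]
  refine Measure.ext_of_Iic _ _ fun t => ?_
  rw [Measure.map_apply hg measurableSet_Iic]
  rw [Measure.add_apply, Measure.smul_apply, Measure.smul_apply, smul_eq_mul, smul_eq_mul,
    Measure.dirac_apply' _ measurableSet_Iic]
  rcases lt_or_ge t 1 with hlt | hge
  · -- case t < 1
    have hd : (Iic t).indicator (1 : ℝ → ℝ≥0∞) 1 = 0 := by
      rw [indicator_of_notMem]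
      simpa using hlt
    rw [hd, mul_zero, zero_add, hsub, hcast, rho_Iic hlt.le]
    -- LHS
    have hbox := ae_mem_box (m+1)
    have hae : (fun x : Fin (m+1) → ℝ => x i / ⨆ j, x j) ⁻¹' Iic t
        =ᵐ[Pm] {x : Fin (m+1) → ℝ | x i ≤ t * ⨆ k, x (i.succAbove k)} := by
      rw [Filter.eventuallyEq_set]
      filter_upwards [hbox] with x hx
      simpa using div_le_iff_box i t hlt x hx
    rw [measure_congr hae]
    set ν : Measure (Fin m → ℝ) := Measure.pi fun _ => ρ with hν
    have hsupm : Measurable fun x : Fin m → ℝ => ⨆ k, x k :=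
      Measurable.iSup fun k => measurable_pi_apply k
    have hT : MeasurableSet {p : ℝ × (Fin m → ℝ) | p.1 ≤ t * ⨆ k, p.2 k} :=
      measurableSet_le measurable_fst (measurable_const.mul (hsupm.comp measurable_snd))
    have hmp := measurePreserving_piFinSuccAbove (fun _ : Fin (m+1) => ρ) i
    have hpre : {x : Fin (m+1) → ℝ | x i ≤ t * ⨆ k, x (i.succAbove k)}
        = (MeasurableEquiv.piFinSuccAbove (fun _ => ℝ) i) ⁻¹'
            {p : ℝ × (Fin m → ℝ) | p.1 ≤ t * ⨆ k, p.2 k} := by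
      ext x
      simp [MeasurableEquiv.piFinSuccAbove, Fin.insertNthEquiv, Fin.removeNth]
    rw [hpre, hmp.measure_preimage hT.nullMeasurableSet, Measure.prod_apply_symm hT]
    have hslice : ∀ x : Fin m → ℝ, ((fun y : ℝ => (y, x)) ⁻¹'
        {p : ℝ × (Fin m → ℝ) | p.1 ≤ t * ⨆ k, p.2 k}) = Iic (t * ⨆ k, x k) := by
      intro x; ext y; simp [mem_Iic]
    have hint : ∫⁻ x, ρ ((fun y : ℝ => (y, x)) ⁻¹'
        {p : ℝ × (Fin m → ℝ) | p.1 ≤ t * ⨆ k, p.2 k}) ∂ν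
        = ∫⁻ x, ENNReal.ofReal t * ENNReal.ofReal (⨆ k, x k) ∂ν := by
      refine lintegral_congr_ae ?_
      filter_upwards [ae_mem_box m] with x hx
      have hs0 : 0 ≤ ⨆ k, x k := Real.iSup_nonneg fun k => (hx k).1.le
      have hs1 : (⨆ k, x k) ≤ 1 := Real.iSup_le (fun k => (hx k).2.le) zero_le_one
      have hts : t * (⨆ k, x k) ≤ 1 :=
        le_trans (mul_le_of_le_one_left hs0 hlt.le) hs1
      rw [hslice x, rho_Iic hts]
      rcases le_or_gt 0 t with ht0 | ht0
      · rw [ENNReal.ofReal_mul ht0]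
      · rw [ENNReal.ofReal_of_nonpos (mul_nonpos_of_nonpos_of_nonneg ht0.le hs0),
          ENNReal.ofReal_of_nonpos ht0.le, zero_mul]
    rw [hint, lintegral_const_mul _ (hsupm.ennreal_ofReal), lint_sup_pi m]
    ring
  · -- case 1 ≤ t
    have hd : (Iic t).indicator (1 : ℝ → ℝ≥0∞) 1 = 1 := by
      have h1t : (1:ℝ) ∈ Iic t := hge
      simp [indicator_of_mem h1t]
    have hρt : ρ (Iic t) = 1 := by
      have hsubρ : Ioo (0:ℝ) 1 ⊆ Iic t := fun x hx => le_trans hx.2.le hge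
      rw [hρ, Measure.restrict_apply measurableSet_Iic, Set.inter_eq_right.2 hsubρ,
        Real.volume_Ioo]
      norm_num
    rw [hd, mul_one, hρt, mul_one, hsub, hcast]
    have hone : Pm ((fun x : Fin (m+1) → ℝ => x i / ⨆ j, x j) ⁻¹' Iic t) = 1 := by
      refine le_antisymm prob_le_one ?_
      have hsubset : (univ.pi fun _ : Fin (m+1) => Ioo (0:ℝ) 1)
          ⊆ (fun x : Fin (m+1) → ℝ => x i / ⨆ j, x j) ⁻¹' Iic t := by
        intro x hx
        simp only [mem_pi, mem_univ, forall_true_left, true_implies] at hx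
        have hisup : x i ≤ ⨆ j, x j := le_ciSup ((Set.finite_range x).bddAbove) i
        have hpos : 0 < ⨆ j, x j := lt_of_lt_of_le (hx i).1 hisup
        simp only [mem_preimage, mem_Iic]
        exact le_trans ((div_le_one hpos).2 hisup) hge
      calc (1:ℝ≥0∞) = Pm (univ.pi fun _ : Fin (m+1) => Ioo (0:ℝ) 1) := by
            rw [hPm, Measure.pi_pi]
            have : ρ (Ioo (0:ℝ) 1) = 1 := by
              rw [hρ, Measure.restrict_apply measurableSet_Ioo, Set.inter_self, Real.volume_Ioo]
              norm_num
            simp [this]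
          _ ≤ _ := measure_mono hsubset
    rw [hone]
    rw [← one_div, ENNReal.div_add_div_same, add_comm (1:ℝ≥0∞),
      ENNReal.div_self hNne hNnt]
end

section
/- For n ≥ 2 and p > n-1, the radial distribution function satisfies P(R^{(p)} ≤ r) → r^n for every r ∈ (0,1) as p → ∞, where R^{(p)} has density f(r) = Γ(1/p)/(Γ(n/p)Γ(1-(n-1)/p)) r^{n-1}(1-r^p)^{-(n-1)/p} on (0,1). In particular the pointwise limit of the densities on (0,1) is n·r^{n-1}, the density of max of n i.i.d. U(0,1) random variables. -/
open MeasureTheory Set Real Filter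

private lemma gammaContOne : ContinuousAt Real.Gamma 1 := by
  refine (Real.differentiableAt_Gamma fun m => ?_).continuousAt
  have := Nat.cast_nonneg (α := ℝ) m
  intro h; linarith

private lemma aux_C (n : ℕ) (hn : 2 ≤ n) :
    Tendsto (fun p : ℝ => Real.Gamma (1/p) /
      (Real.Gamma (n/p) * Real.Gamma (1 - ((n : ℝ) - 1)/p))) atTop (nhds n) := by
  have hn0 : (0:ℝ) < n := by positivity
  have h0 : Tendsto (fun p : ℝ => 1/p) atTop (nhds 0) := by
    simpa [one_div] using tendsto_inv_atTop_zero
  have hA : Tendsto (fun p : ℝ => Real.Gamma (1 + 1/p)) atTop (nhds 1) := by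
    have := gammaContOne.tendsto.comp
      (show Tendsto (fun p : ℝ => 1 + 1/p) atTop (nhds 1) by
        simpa using tendsto_const_nhds.add h0)
    simpa [Real.Gamma_one, Function.comp_def] using this
  have hB : Tendsto (fun p : ℝ => Real.Gamma (1 + n/p)) atTop (nhds 1) := by
    have := gammaContOne.tendsto.comp
      (show Tendsto (fun p : ℝ => 1 + (n:ℝ)/p) atTop (nhds 1) by
        have : Tendsto (fun p : ℝ => (n:ℝ)/p) atTop (nhds 0) := by
          simpa [div_eq_mul_inv] using h0.const_mul (n:ℝ)
        simpa using tendsto_const_nhds.add this)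
    simpa [Real.Gamma_one, Function.comp_def] using this
  have hCg : Tendsto (fun p : ℝ => Real.Gamma (1 - ((n:ℝ)-1)/p)) atTop (nhds 1) := by
    have := gammaContOne.tendsto.comp
      (show Tendsto (fun p : ℝ => 1 - ((n:ℝ)-1)/p) atTop (nhds 1) by
        have : Tendsto (fun p : ℝ => ((n:ℝ)-1)/p) atTop (nhds 0) := by
          simpa [div_eq_mul_inv] using h0.const_mul ((n:ℝ)-1)
        simpa using tendsto_const_nhds.sub this)
    simpa [Real.Gamma_one, Function.comp_def] using this
  have hg : Tendsto (fun p : ℝ =>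
      (n:ℝ) * Real.Gamma (1 + 1/p) / (Real.Gamma (1 + n/p) * Real.Gamma (1 - ((n:ℝ)-1)/p)))
      atTop (nhds n) := by
    have := ((tendsto_const_nhds (x := (n:ℝ))).mul hA).div (hB.mul hCg) (by norm_num)
    simpa [Pi.div_def] using this
  refine hg.congr' ?_
  filter_upwards [eventually_gt_atTop (0:ℝ)] with p hp
  have hp' : p ≠ 0 := hp.ne'
  have e1 : Real.Gamma (1/p) = p * Real.Gamma (1 + 1/p) := by
    rw [add_comm, Real.Gamma_add_one (by positivity)]
    field_simp
  have e2 : Real.Gamma ((n:ℝ)/p) = p / n * Real.Gamma (1 + (n:ℝ)/p) := by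
    rw [add_comm, Real.Gamma_add_one (by positivity)]
    field_simp
  rw [e1, e2]
  rw [show p / (n:ℝ) * Real.Gamma (1 + (n:ℝ)/p) * Real.Gamma (1 - ((n:ℝ)-1)/p)
      = p * (Real.Gamma (1 + (n:ℝ)/p) * Real.Gamma (1 - ((n:ℝ)-1)/p)) / n by ring,
    div_div_eq_mul_div, show p * Real.Gamma (1 + 1/p) * (n:ℝ)
      = p * ((n:ℝ) * Real.Gamma (1 + 1/p)) by ring,
    mul_div_mul_left _ _ hp']

/-- As p → ∞, the radial CDF converges to r^n for every r ∈ (0,1), and the radial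
density converges pointwise to n r^{n-1}, the density of the maximum of n i.i.d.
U(0,1) random variables. -/
theorem radial_limit_at_top (n : ℕ) (hn : 2 ≤ n) :
    ∀ r ∈ Ioo (0:ℝ) 1,
      Tendsto (fun p : ℝ => ∫ x in (0:ℝ)..r,
          Real.Gamma (1/p) / (Real.Gamma (n/p) * Real.Gamma (1 - ((n : ℝ) - 1)/p)) *
            x ^ ((n : ℝ) - 1) * (1 - x ^ p) ^ (-(((n : ℝ) - 1)/p)))
        atTop (nhds (r ^ n)) ∧
      Tendsto (fun p : ℝ =>
          Real.Gamma (1/p) / (Real.Gamma (n/p) * Real.Gamma (1 - ((n : ℝ) - 1)/p)) *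
            r ^ ((n : ℝ) - 1) * (1 - r ^ p) ^ (-(((n : ℝ) - 1)/p)))
        atTop (nhds (n * r ^ ((n : ℝ) - 1))) := by
  intro r hr
  obtain ⟨hr0, hr1⟩ := hr
  have hn0 : (0:ℝ) < n := by positivity
  have hn1 : (0:ℝ) ≤ (n:ℝ) - 1 := by
    have : (2:ℝ) ≤ n := by exact_mod_cast hn
    linarith
  set C : ℝ → ℝ := fun p =>
    Real.Gamma (1/p) / (Real.Gamma (n/p) * Real.Gamma (1 - ((n : ℝ) - 1)/p)) with hCdef
  have hC : Tendsto C atTop (nhds n) := aux_C n hn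
  -- r^p → 0
  have hrp : Tendsto (fun p : ℝ => r ^ p) atTop (nhds 0) :=
    tendsto_rpow_atTop_of_base_lt_one r (by linarith) hr1
  have hexp : Tendsto (fun p : ℝ => -(((n:ℝ)-1)/p)) atTop (nhds 0) := by
    have h0 : Tendsto (fun p : ℝ => 1/p) atTop (nhds 0) := by
      simpa [one_div] using tendsto_inv_atTop_zero
    have : Tendsto (fun p : ℝ => ((n:ℝ)-1)/p) atTop (nhds 0) := by
      simpa [div_eq_mul_inv] using h0.const_mul ((n:ℝ)-1)
    simpa using this.neg
  have hW : Tendsto (fun p : ℝ => (1 - r ^ p) ^ (-(((n:ℝ)-1)/p))) atTop (nhds 1) := by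
    have hbase : Tendsto (fun p : ℝ => 1 - r ^ p) atTop (nhds 1) := by
      simpa using tendsto_const_nhds.sub hrp
    have := hbase.rpow hexp (Or.inl one_ne_zero)
    simpa using this
  constructor
  · -- CDF part: squeeze
    -- lower bound g, upper bound h
    have hg : Tendsto (fun p : ℝ => C p * r ^ n / n) atTop (nhds (r ^ n)) := by
      have := (hC.mul_const (r ^ n)).div_const (n:ℝ)
      rw [show (n:ℝ) * r ^ n / n = r ^ n by field_simp] at this
      exact this
    have hh : Tendsto (fun p : ℝ => C p * (1 - r ^ p) ^ (-(((n:ℝ)-1)/p)) * r ^ n / n)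
        atTop (nhds (r ^ n)) := by
      have := ((hC.mul hW).mul_const (r ^ n)).div_const (n:ℝ)
      rw [show (n:ℝ) * 1 * r ^ n / n = r ^ n by field_simp] at this
      exact this
    refine tendsto_of_tendsto_of_tendsto_of_le_of_le' hg hh ?_ ?_
    all_goals {
      filter_upwards [eventually_gt_atTop (0:ℝ), hC.eventually (eventually_gt_nhds hn0)]
        with p hp hCp
      have hCp' : 0 ≤ C p := hCp.le
      have hrp1 : r ^ p < 1 := Real.rpow_lt_one hr0.le hr1 hp
      have hexp' : -(((n:ℝ)-1)/p) ≤ 0 := by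
        have : 0 ≤ ((n:ℝ)-1)/p := by positivity
        linarith
      -- continuity facts on [0, r]
      have hcont_pow : ContinuousOn (fun x : ℝ => x ^ ((n:ℝ)-1)) (Icc 0 r) :=
        continuousOn_id.rpow_const (fun x _ => Or.inr hn1)
      have hcont_w : ContinuousOn (fun x : ℝ => (1 - x ^ p) ^ (-(((n:ℝ)-1)/p))) (Icc 0 r) := by
        refine ContinuousOn.rpow_const ?_ ?_
        · exact continuousOn_const.sub (continuousOn_id.rpow_const (fun x _ => Or.inr hp.le))
        · intro x hx
          left
          have hxp : x ^ p ≤ r ^ p := Real.rpow_le_rpow hx.1 hx.2 hp.le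
          have : 0 < 1 - x ^ p := by linarith
          exact this.ne'
      have hint1 : IntervalIntegrable (fun x : ℝ => C p * x ^ ((n:ℝ)-1)) volume 0 r := by
        apply ContinuousOn.intervalIntegrable
        rw [uIcc_of_le hr0.le]
        exact continuousOn_const.mul hcont_pow
      have hint2 : IntervalIntegrable (fun x : ℝ =>
          C p * x ^ ((n:ℝ)-1) * (1 - x ^ p) ^ (-(((n:ℝ)-1)/p))) volume 0 r := by
        apply ContinuousOn.intervalIntegrable
        rw [uIcc_of_le hr0.le]
        exact (continuousOn_const.mul hcont_pow).mul hcont_w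
      have hint3 : IntervalIntegrable (fun x : ℝ =>
          C p * x ^ ((n:ℝ)-1) * (1 - r ^ p) ^ (-(((n:ℝ)-1)/p))) volume 0 r := by
        apply ContinuousOn.intervalIntegrable
        rw [uIcc_of_le hr0.le]
        exact (continuousOn_const.mul hcont_pow).mul continuousOn_const
      have hbasic : ∫ x in (0:ℝ)..r, C p * x ^ ((n:ℝ)-1) = C p * r ^ n / n := by
        rw [intervalIntegral.integral_const_mul,
          integral_rpow (Or.inl (by linarith : (-1:ℝ) < (n:ℝ)-1))]
        rw [show ((n:ℝ)-1) + 1 = (n:ℝ) by ring, Real.zero_rpow (by positivity),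
          Real.rpow_natCast]
        ring
      -- pointwise bounds
      have hptw : ∀ x ∈ Icc (0:ℝ) r,
          C p * x ^ ((n:ℝ)-1) ≤ C p * x ^ ((n:ℝ)-1) * (1 - x ^ p) ^ (-(((n:ℝ)-1)/p)) ∧
          C p * x ^ ((n:ℝ)-1) * (1 - x ^ p) ^ (-(((n:ℝ)-1)/p)) ≤
            C p * x ^ ((n:ℝ)-1) * (1 - r ^ p) ^ (-(((n:ℝ)-1)/p)) := by
        intro x hx
        have hxp : x ^ p ≤ r ^ p := Real.rpow_le_rpow hx.1 hx.2 hp.le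
        have hxp0 : 0 ≤ x ^ p := Real.rpow_nonneg hx.1 p
        have h1x : 0 < 1 - x ^ p := by linarith
        have hnn : 0 ≤ C p * x ^ ((n:ℝ)-1) :=
          mul_nonneg hCp' (Real.rpow_nonneg hx.1 _)
        constructor
        · exact le_mul_of_one_le_right hnn
            (Real.one_le_rpow_of_pos_of_le_one_of_nonpos h1x (by linarith) hexp')
        · exact mul_le_mul_of_nonneg_left
            (Real.rpow_le_rpow_of_nonpos (by linarith) (by linarith) hexp') hnn
      first
      | · -- lower bound goal
          rw [← hbasic]
          exact intervalIntegral.integral_mono_on hr0.le hint1 hint2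
            (fun x hx => (hptw x hx).1)
      | · -- upper bound goal
          calc ∫ x in (0:ℝ)..r,
                C p * x ^ ((n:ℝ)-1) * (1 - x ^ p) ^ (-(((n:ℝ)-1)/p))
              ≤ ∫ x in (0:ℝ)..r,
                C p * x ^ ((n:ℝ)-1) * (1 - r ^ p) ^ (-(((n:ℝ)-1)/p)) :=
                intervalIntegral.integral_mono_on hr0.le hint2 hint3
                  (fun x hx => (hptw x hx).2)
            _ = C p * (1 - r ^ p) ^ (-(((n:ℝ)-1)/p)) * r ^ n / n := by
                rw [intervalIntegral.integral_mul_const, hbasic]; ring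
    }
  · -- density part
    have := (hC.mul_const (r ^ ((n:ℝ)-1))).mul hW
    simpa [hCdef] using this
end

section
/- For any p > 1, 12 · Γ(2/p)²/(3·Γ(1/p)·Γ(3/p)) - 3 ∈ [-1, 0); i.e., the correlation ρ_p = 4Γ(2/p)²/(Γ(1/p)Γ(3/p)) - 3 of the bivariate positive L_p-norm spherical copula satisfies -1 ≤ ρ_p < 0. -/
open Real Set Filter Finset Topology

noncomputable def gammaProd (x : ℝ) (n : ℕ) : ℝ :=
  ∏ j ∈ Finset.range (n + 1), (2*x + j)^2 / ((x + j) * (3*x + j))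

lemma gammaProd_eq (x : ℝ) (hx : 0 < x) (n : ℕ) (hn : 1 ≤ n) :
    Real.GammaSeq x n * Real.GammaSeq (3*x) n / (Real.GammaSeq (2*x) n)^2
      = gammaProd x n := by
  have hA : (0:ℝ) < ∏ j ∈ Finset.range (n + 1), (x + j) :=
    Finset.prod_pos fun j _ => by positivity
  have hB : (0:ℝ) < ∏ j ∈ Finset.range (n + 1), (3*x + j) :=
    Finset.prod_pos fun j _ => by positivity
  have hC : (0:ℝ) < ∏ j ∈ Finset.range (n + 1), (2*x + j) :=
    Finset.prod_pos fun j _ => by positivity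
  have hnpos : (0:ℝ) < (n:ℝ) := by exact_mod_cast hn
  have hnx : (0:ℝ) < (n:ℝ) ^ x := Real.rpow_pos_of_pos hnpos x
  have hn2x : (0:ℝ) < (n:ℝ) ^ (2*x) := Real.rpow_pos_of_pos hnpos _
  have hn3x : (0:ℝ) < (n:ℝ) ^ (3*x) := Real.rpow_pos_of_pos hnpos _
  have hfac : (0:ℝ) < (n.factorial : ℝ) := by exact_mod_cast n.factorial_pos
  have hpow : (n:ℝ) ^ x * (n:ℝ) ^ (3*x) = ((n:ℝ) ^ (2*x))^2 := by
    rw [← Real.rpow_natCast ((n:ℝ) ^ (2*x)) 2, ← Real.rpow_mul hnpos.le,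
      ← Real.rpow_add hnpos]
    ring_nf
  unfold Real.GammaSeq gammaProd
  rw [Finset.prod_div_distrib, Finset.prod_pow, Finset.prod_mul_distrib]
  field_simp
  rw [mul_comm x 3, mul_comm x 2]
  exact hpow

lemma gammaProd_tendsto (x : ℝ) (hx : 0 < x) :
    Tendsto (gammaProd x) atTop
      (𝓝 (Real.Gamma x * Real.Gamma (3*x) / (Real.Gamma (2*x))^2)) := by
  have h2 : Real.Gamma (2*x) ≠ 0 := (Real.Gamma_pos_of_pos (by linarith)).ne'
  have H := ((Real.GammaSeq_tendsto_Gamma x).mul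
    (Real.GammaSeq_tendsto_Gamma (3*x))).div
    ((Real.GammaSeq_tendsto_Gamma (2*x)).pow 2) (pow_ne_zero 2 h2)
  refine H.congr' ?_
  filter_upwards [eventually_ge_atTop 1] with n hn
  exact gammaProd_eq x hx n hn

lemma factor_one_le (x : ℝ) (hx : 0 < x) (j : ℕ) :
    (1:ℝ) ≤ (2*x + j)^2 / ((x + j) * (3*x + j)) := by
  have hd : (0:ℝ) < (x + j) * (3*x + j) := by positivity
  rw [le_div_iff₀ hd]
  nlinarith [sq_nonneg x]

lemma gammaProd_pos (x : ℝ) (hx : 0 < x) (n : ℕ) : 0 < gammaProd x n :=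
  Finset.prod_pos fun j _ => by positivity

lemma gammaProd_lower (x : ℝ) (hx : 0 < x) (n : ℕ) (hn : 1 ≤ n) :
    4/3 * ((2*x + 1)^2 / ((x + 1) * (3*x + 1))) ≤ gammaProd x n := by
  have h1 : gammaProd x 1 = 4/3 * ((2*x + 1)^2 / ((x + 1) * (3*x + 1))) := by
    rw [gammaProd, Finset.prod_range_succ, Finset.prod_range_one]
    push_cast
    rw [add_zero, add_zero, add_zero]
    field_simp
    ring
  rw [← h1]
  induction n, hn using Nat.le_induction with
  | base => exact le_rfl
  | succ n hn ih =>
    calc gammaProd x 1 ≤ gammaProd x n := ih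
    _ ≤ gammaProd x (n+1) := by
        have hstep : gammaProd x (n+1) = gammaProd x n *
            ((2*x + ((n+1 : ℕ) : ℝ))^2 / ((x + ((n+1 : ℕ) : ℝ)) * (3*x + ((n+1 : ℕ) : ℝ)))) :=
          Finset.prod_range_succ _ (n+1)
        rw [hstep]
        nlinarith [factor_one_le x hx (n+1), gammaProd_pos x hx n]

lemma factor_mono (x : ℝ) (hx : 0 < x) (hx1 : x ≤ 1) (j : ℕ) :
    (2*x + j)^2 / ((x + j) * (3*x + j)) ≤ (2*1 + j)^2 / ((1 + j) * (3*1 + j)) := by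
  have hd : (0:ℝ) < (x + j) * (3*x + j) := by positivity
  have hd1 : (0:ℝ) < ((1:ℝ) + j) * (3*1 + j) := by positivity
  rw [div_le_div_iff₀ hd hd1]
  have hj : (0:ℝ) ≤ (j:ℝ) := j.cast_nonneg
  nlinarith [mul_nonneg (mul_nonneg hx.le hj) (sub_nonneg.2 hx1),
    mul_nonneg (mul_nonneg hj hj) (mul_nonneg (sub_nonneg.2 hx1) (by linarith : (0:ℝ) ≤ 1 + x))]

lemma gammaProd_mono (x : ℝ) (hx : 0 < x) (hx1 : x ≤ 1) (n : ℕ) :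
    gammaProd x n ≤ gammaProd 1 n := by
  refine Finset.prod_le_prod (fun j _ => by positivity) (fun j _ => factor_mono x hx hx1 j)

/-- For every p > 1, the correlation ρ_p = 4Γ(2/p)²/(Γ(1/p)Γ(3/p)) - 3 of the
bivariate positive L_p-norm spherical copula satisfies -1 ≤ ρ_p < 0. -/
theorem correlation_range (p : ℝ) (hp : 1 < p) :
    -1 ≤ 4 * Real.Gamma (2/p) ^ 2 / (Real.Gamma (1/p) * Real.Gamma (3/p)) - 3 ∧
    4 * Real.Gamma (2/p) ^ 2 / (Real.Gamma (1/p) * Real.Gamma (3/p)) - 3 < 0 := by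
  have hp0 : 0 < p := by linarith
  set x : ℝ := 1/p with hxdef
  have hx : 0 < x := by positivity
  have hx1 : x ≤ 1 := by
    rw [hxdef, div_le_one hp0]; linarith
  have e2 : (2:ℝ)/p = 2*x := by rw [hxdef]; ring
  have e3 : (3:ℝ)/p = 3*x := by rw [hxdef]; ring
  rw [e2, e3]
  -- Q := Γ(x)Γ(3x)/Γ(2x)² satisfies 4/3 < Q ≤ 2
  have hA : 0 < Real.Gamma x * Real.Gamma (3*x) :=
    mul_pos (Real.Gamma_pos_of_pos hx) (Real.Gamma_pos_of_pos (by linarith))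
  have hB : 0 < Real.Gamma (2*x) ^ 2 :=
    pow_pos (Real.Gamma_pos_of_pos (by linarith)) 2
  have hQhigh : Real.Gamma x * Real.Gamma (3*x) / (Real.Gamma (2*x))^2 ≤ 2 := by
    have hval : Real.Gamma 1 * Real.Gamma (3*1) / (Real.Gamma (2*1))^2 = 2 := by
      have h3 : Real.Gamma 3 = 2 := by
        have := Real.Gamma_nat_eq_factorial 2
        norm_num at this
        convert this using 2 <;> norm_num
      have h2 : Real.Gamma 2 = 1 := by
        have := Real.Gamma_nat_eq_factorial 1
        norm_num at this
        convert this using 2 <;> norm_num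
      rw [Real.Gamma_one]
      norm_num [h3, h2]
    have := le_of_tendsto_of_tendsto' (gammaProd_tendsto x hx)
      (gammaProd_tendsto 1 one_pos) (fun n => gammaProd_mono x hx hx1 n)
    rwa [hval] at this
  have hQlow : 4/3 < Real.Gamma x * Real.Gamma (3*x) / (Real.Gamma (2*x))^2 := by
    have hc : 4/3 * ((2*x + 1)^2 / ((x + 1) * (3*x + 1)))
        ≤ Real.Gamma x * Real.Gamma (3*x) / (Real.Gamma (2*x))^2 :=
      ge_of_tendsto (gammaProd_tendsto x hx)
        (eventually_atTop.2 ⟨1, fun n hn => gammaProd_lower x hx n hn⟩)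
    have hr : (1:ℝ) < (2*x + 1)^2 / ((x + 1) * (3*x + 1)) := by
      rw [lt_div_iff₀ (by positivity)]
      nlinarith [sq_nonneg x]
    nlinarith
  -- translate bounds on Q into bounds on ρ = 4/Q - 3
  have hABl : 4 * (Real.Gamma (2*x))^2 < 3 * (Real.Gamma x * Real.Gamma (3*x)) := by
    rw [lt_div_iff₀ hB] at hQlow
    nlinarith
  have hABh : Real.Gamma x * Real.Gamma (3*x) ≤ 2 * (Real.Gamma (2*x))^2 := by
    rw [div_le_iff₀ hB] at hQhigh
    linarith
  constructor
  · have h2 : 2 ≤ 4 * (Real.Gamma (2*x))^2 / (Real.Gamma x * Real.Gamma (3*x)) := by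
      rw [le_div_iff₀ hA]; linarith
    linarith
  · rw [sub_neg, div_lt_iff₀ hA]
    linarith
end
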